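/- Let A = (A_1,…,A_n) be a commuting tuple of linear operators on a finite-dimensional complex vector space V, and let V(0) := ∪_{i_1,…,i_n} Ker(A_1^{i_1}) ∩ … ∩ Ker(A_n^{i_n}) be the joint generalized eigenspace at 0. Then H_k(A,V) ≅ H_k(A,V(0)) for all k ∈ {0,…,n}; moreover H_n(A,V(0)) ≅ ∩_{i=1}^n Ker(A_i), and this space is nonzero if and only if V(0) ≠ {0}. -/

import Mathlib

open Filter Topology
namespace KN
variable {V : Type*} [AddCommGroup V] [Module ℂ V]

noncomputable def koszulD {n : ℕ} (A : Fin n → Module.End ℂ V) (k : ℕ) :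
    ({s : Finset (Fin n) // s.card = k + 1} → V) →ₗ[ℂ]
      ({s : Finset (Fin n) // s.card = k} → V) where
  toFun f s := ∑ j ∈ (s : Finset (Fin n))ᶜ.attach,
    ((-1 : ℂ) ^ ((s : Finset (Fin n)).filter (· < (j : Fin n))).card) •
      A (j : Fin n) (f ⟨insert (j : Fin n) (s : Finset (Fin n)), by
        rw [Finset.card_insert_of_notMem (Finset.mem_compl.mp j.2), s.2]⟩)
  map_add' f g := by
    funext s
    simp [Pi.add_apply, map_add, smul_add, Finset.sum_add_distrib]
  map_smul' c f := by
    funext s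
    simp only [Pi.smul_apply, map_smul, RingHom.id_apply, Finset.smul_sum]
    exact Finset.sum_congr rfl fun j _ => smul_comm _ _ _

noncomputable def koszulDDown {n : ℕ} (A : Fin n → Module.End ℂ V) :
    (k : ℕ) → (({s : Finset (Fin n) // s.card = k} → V) →ₗ[ℂ]
      ({s : Finset (Fin n) // s.card = k - 1} → V))
  | 0 => 0
  | (k + 1) => koszulD A k

noncomputable abbrev koszulHomology {n : ℕ} (A : Fin n → Module.End ℂ V) (k : ℕ) :=
  LinearMap.ker (koszulDDown A k) ⧸
    (Submodule.comap (LinearMap.ker (koszulDDown A k)).subtype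
      (LinearMap.range (koszulD A k)))


/-- A commuting tuple is Fredholm when all its Koszul homology groups are finite
dimensional. -/
def KoszulFredholm {n : ℕ} (A : Fin n → Module.End ℂ V) : Prop :=
  ∀ k, FiniteDimensional ℂ (koszulHomology A k)

/-- The index of a Fredholm commuting tuple: minus the Euler characteristic of its
Koszul complex. -/
noncomputable def koszulIndex {n : ℕ} (A : Fin n → Module.End ℂ V) : ℤ :=
  ∑ k ∈ Finset.range (n + 1),
    (-1) ^ (k + 1) * (Module.finrank ℂ (koszulHomology A k) : ℤ)

/-- The tuple `A - λ`. -/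
noncomputable def tupleSub {n : ℕ} (A : Fin n → Module.End ℂ V) (lam : Fin n → ℂ) :
    Fin n → Module.End ℂ V :=
  fun i => A i - algebraMap ℂ (Module.End ℂ V) (lam i)

/-- The tuple `λ - A`. -/
noncomputable def subTuple {n : ℕ} (lam : Fin n → ℂ) (A : Fin n → Module.End ℂ V) :
    Fin n → Module.End ℂ V :=
  fun i => algebraMap ℂ (Module.End ℂ V) (lam i) - A i

/-- The Taylor spectrum of a commuting tuple: those `λ` for which the Koszul complex of
`A - λ` is not exact. -/
def taylorSpectrum {n : ℕ} (A : Fin n → Module.End ℂ V) : Set (Fin n → ℂ) :=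
  {lam | ∃ k, Nontrivial (koszulHomology (tupleSub A lam) k)}

lemma compLeft_koszulD {n : ℕ} (A : Fin n → Module.End ℂ V) (T : Module.End ℂ V)
    (hT : ∀ i, Commute T (A i)) (k : ℕ) :
    (T.compLeft {s : Finset (Fin n) // s.card = k}).comp (koszulD A k)
      = (koszulD A k).comp (T.compLeft _) := by
  have hpt : ∀ (i : Fin n) (y : V), T (A i y) = A i (T y) := fun i y => by
    have h := LinearMap.congr_fun ((hT i).eq) y
    simpa [Module.End.mul_apply] using h
  ext f s
  simp only [LinearMap.comp_apply, LinearMap.compLeft_apply, Function.comp_apply, koszulD,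
    LinearMap.coe_mk, AddHom.coe_mk, map_sum, map_smul]
  exact Finset.sum_congr rfl fun j _ => by rw [hpt]

lemma compLeft_koszulDDown {n : ℕ} (A : Fin n → Module.End ℂ V) (T : Module.End ℂ V)
    (hT : ∀ i, Commute T (A i)) (k : ℕ) :
    (T.compLeft {s : Finset (Fin n) // s.card = k - 1}).comp (koszulDDown A k)
      = (koszulDDown A k).comp (T.compLeft _) := by
  cases k with
  | zero => ext f s; simp [koszulDDown]
  | succ k => exact compLeft_koszulD A T hT k

open Classical in
/-- The endomorphism of Koszul homology induced by an operator `T` commuting with the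
tuple `A` (junk value `0` if `T` does not commute with `A`). -/
noncomputable def koszulInduced {n : ℕ} (A : Fin n → Module.End ℂ V) (T : Module.End ℂ V)
    (k : ℕ) : Module.End ℂ (koszulHomology A k) :=
  if hT : ∀ i, Commute T (A i) then
    Submodule.mapQ _ _
      ((T.compLeft _).restrict (p := LinearMap.ker (koszulDDown A k))
        (q := LinearMap.ker (koszulDDown A k))
        (fun x hx => by
          have h := LinearMap.congr_fun (compLeft_koszulDDown A T hT k) x
          simp only [LinearMap.comp_apply] at h
          simp only [LinearMap.mem_ker] at hx ⊢
          rw [← h, hx, map_zero]))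
      (fun x hx => by
        simp only [Submodule.mem_comap, LinearMap.mem_range] at hx ⊢
        obtain ⟨y, hy⟩ := hx
        refine ⟨(T.compLeft _) y, ?_⟩
        have h := LinearMap.congr_fun (compLeft_koszulD A T hT k) y
        simp only [LinearMap.comp_apply] at h
        rw [← h, hy]
        rfl)
  else 0

/-- The tuple induced by `A` on the Koszul homology of `B`. -/
noncomputable def inducedTuple {n m : ℕ} (B : Fin m → Module.End ℂ V)
    (A : Fin n → Module.End ℂ V) (k : ℕ) : Fin n → Module.End ℂ (koszulHomology B k) :=
  fun i => koszulInduced B (A i) k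

/-- The generalized eigenspace of an endomorphism at `μ`: the union of the kernels of the
powers of `T - μ`. -/
noncomputable def maxGenEig (T : Module.End ℂ V) (mu : ℂ) : Submodule ℂ V :=
  ⨆ k : ℕ, LinearMap.ker ((T - algebraMap ℂ (Module.End ℂ V) mu) ^ k)

/-- The joint generalized eigenspace of a tuple of endomorphisms at `λ`. -/
noncomputable def jointGenEig {n : ℕ} (T : Fin n → Module.End ℂ V) (lam : Fin n → ℂ) :
    Submodule ℂ V :=
  ⨅ i, maxGenEig (T i) (lam i)

/-- The local index at `λ` of a Fredholm commuting tuple `B` (in the intended application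
`B = g(A)`) with respect to the "coordinate" tuple `A`: minus the Euler characteristic of
the joint generalized eigenspaces at `λ`, inside the Koszul homology of `B`, of the tuple
induced by `A`. -/
noncomputable def localIndex {n m : ℕ} (B : Fin m → Module.End ℂ V)
    (A : Fin n → Module.End ℂ V) (lam : Fin n → ℂ) : ℤ :=
  ∑ k ∈ Finset.range (m + 1), (-1) ^ (k + 1) *
    (Module.finrank ℂ (jointGenEig (inducedTuple B A k) lam) : ℤ)

open Classical in
/-- The restriction of an endomorphism to an invariant submodule (junk value `0` if the
submodule is not invariant). -/
noncomputable def restrictEnd (p : Submodule ℂ V) (T : Module.End ℂ V) :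
    Module.End ℂ ↥p :=
  if h : ∀ x ∈ p, T x ∈ p then T.restrict h else 0

/-- The set of common zeroes of a family of functions inside a set `S`. -/
def zeroSetOn {n m : ℕ} (S : Set (Fin n → ℂ)) (g : Fin m → ((Fin n → ℂ) → ℂ)) :
    Set (Fin n → ℂ) :=
  {x ∈ S | ∀ j, g j x = 0}

section Hilbert

variable {H : Type*} [NormedAddCommGroup H] [InnerProductSpace ℂ H] [CompleteSpace H]

/-- The tuple of underlying linear endomorphisms of a tuple of bounded operators. -/
noncomputable def opEnd {n : ℕ} (A : Fin n → (H →L[ℂ] H)) : Fin n → Module.End ℂ H :=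
  fun i => (A i).toLinearMap

/-- The Taylor spectrum of a commuting tuple of bounded operators. -/
def opTaylorSpectrum {n : ℕ} (A : Fin n → (H →L[ℂ] H)) : Set (Fin n → ℂ) :=
  taylorSpectrum (opEnd A)

/-- The essential Taylor spectrum: `λ ∉ Sp_ess(A)` if and only if `A - λ` is Fredholm. -/
def essSpectrum {n : ℕ} (A : Fin n → (H →L[ℂ] H)) : Set (Fin n → ℂ) :=
  {lam | ¬ KoszulFredholm (tupleSub (opEnd A) lam)}

/-- Taylor's holomorphic functional calculus for a commuting tuple `A` of bounded
operators on a Hilbert space, with symbols holomorphic on an open neighbourhood `U` of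
the Taylor spectrum: a unital algebra homomorphism `f ↦ f(A)` into the commutant of `A`,
sending the coordinate functions to the members of `A` and satisfying the spectral
mapping property `Sp(f(A)) = f(Sp(A))` for tuple-valued symbols. -/
structure OpCalculus {n : ℕ} (A : Fin n → (H →L[ℂ] H)) (U : Set (Fin n → ℂ)) :
    Type _ where
  toFun : ((Fin n → ℂ) → ℂ) → (H →L[ℂ] H)
  isOpen_dom : IsOpen U
  spec_sub : opTaylorSpectrum A ⊆ U
  map_one' : toFun 1 = 1
  map_add' : ∀ f g, DifferentiableOn ℂ f U → DifferentiableOn ℂ g U →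
    toFun (f + g) = toFun f + toFun g
  map_mul' : ∀ f g, DifferentiableOn ℂ f U → DifferentiableOn ℂ g U →
    toFun (f * g) = toFun f * toFun g
  map_smul' : ∀ (c : ℂ) f, DifferentiableOn ℂ f U → toFun (c • f) = c • toFun f
  map_coord : ∀ i, toFun (fun z => z i) = A i
  commutes : ∀ f, DifferentiableOn ℂ f U → ∀ i, Commute (A i) (toFun f)
  spectral_mapping : ∀ (m : ℕ) (h : Fin m → ((Fin n → ℂ) → ℂ)),
    (∀ j, DifferentiableOn ℂ (h j) U) →
    opTaylorSpectrum (fun j => toFun (h j)) = (fun z j => h j z) '' opTaylorSpectrum A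

end Hilbert

/-- A holomorphic functional calculus for a commuting tuple of endomorphisms of a complex
vector space (used for tuples acting on finite dimensional homology spaces). -/
structure EndCalculus {n : ℕ} {V : Type*} [AddCommGroup V] [Module ℂ V]
    (A : Fin n → Module.End ℂ V) (U : Set (Fin n → ℂ)) : Type _ where
  toFun : ((Fin n → ℂ) → ℂ) → Module.End ℂ V
  isOpen_dom : IsOpen U
  spec_sub : taylorSpectrum A ⊆ U
  map_one' : toFun 1 = 1
  map_add' : ∀ f g, DifferentiableOn ℂ f U → DifferentiableOn ℂ g U →
    toFun (f + g) = toFun f + toFun g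
  map_mul' : ∀ f g, DifferentiableOn ℂ f U → DifferentiableOn ℂ g U →
    toFun (f * g) = toFun f * toFun g
  map_smul' : ∀ (c : ℂ) f, DifferentiableOn ℂ f U → toFun (c • f) = c • toFun f
  map_coord : ∀ i, toFun (fun z => z i) = A i
  commutes : ∀ f, DifferentiableOn ℂ f U → ∀ i, Commute (A i) (toFun f)
  spectral_mapping : ∀ (m : ℕ) (h : Fin m → ((Fin n → ℂ) → ℂ)),
    (∀ j, DifferentiableOn ℂ (h j) U) →
    taylorSpectrum (fun j => toFun (h j)) = (fun z j => h j z) '' taylorSpectrum A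



noncomputable instance germAlgebra {α : Type*} {l : Filter α} : Algebra ℂ (Filter.Germ l ℂ) :=
  Algebra.ofModule
    (fun c x y => by
      refine Filter.Germ.inductionOn₂ x y fun f g => ?_
      simp only [← Filter.Germ.coe_smul, ← Filter.Germ.coe_mul, smul_mul_assoc])
    (fun c x y => by
      refine Filter.Germ.inductionOn₂ x y fun f g => ?_
      simp only [← Filter.Germ.coe_smul, ← Filter.Germ.coe_mul, mul_smul_comm])

/-- The ring of germs at `x` of analytic functions: the subalgebra of the ring of germs
of functions at `x` consisting of germs having an analytic representative. -/
noncomputable def analyticGermsAt {n : ℕ} (x : Fin n → ℂ) :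
    Subalgebra ℂ (Filter.Germ (𝓝 x) ℂ) where
  carrier := {φ | ∃ f : (Fin n → ℂ) → ℂ, AnalyticAt ℂ f x ∧ φ = ↑f}
  mul_mem' := by
    rintro a b ⟨f, hf, rfl⟩ ⟨g, hg, rfl⟩
    exact ⟨f * g, hf.mul hg, rfl⟩
  add_mem' := by
    rintro a b ⟨f, hf, rfl⟩ ⟨g, hg, rfl⟩
    exact ⟨f + g, hf.add hg, rfl⟩
  algebraMap_mem' := fun c => ⟨fun _ => c, analyticAt_const, by
    rw [Algebra.algebraMap_eq_smul_one, ← Filter.Germ.coe_one (l := 𝓝 x),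
      ← Filter.Germ.coe_smul]
    congr 1
    funext z
    simp⟩

/-- The local degree (intersection multiplicity) at `x` of an `n`-tuple `g` of functions
of `n` complex variables: the dimension of the quotient of the ring of germs of analytic
functions at `x` by the ideal generated by the germs of the components of `g`. -/
noncomputable def localDegree {n : ℕ} (g : Fin n → ((Fin n → ℂ) → ℂ)) (x : Fin n → ℂ) : ℕ :=
  Module.finrank ℂ
    (↥(analyticGermsAt x) ⧸ Ideal.span
      {y : ↥(analyticGermsAt x) | ∃ i, (y : Filter.Germ (𝓝 x) ℂ) = ↑(g i)})


/-- The ring `O(S)` of germs of holomorphic functions on (open neighbourhoods of) a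
compact set `S`: the subalgebra of the ring of germs of functions along the neighbourhood
filter of `S` consisting of germs having a representative holomorphic on an open
neighbourhood of `S`. -/
noncomputable def holGermsOn {n : ℕ} (S : Set (Fin n → ℂ)) :
    Subalgebra ℂ (Filter.Germ (𝓝ˢ S) ℂ) where
  carrier := {φ | ∃ f : (Fin n → ℂ) → ℂ, ∃ U : Set (Fin n → ℂ),
    IsOpen U ∧ S ⊆ U ∧ DifferentiableOn ℂ f U ∧ φ = ↑f}
  mul_mem' := by
    rintro a b ⟨f, U, hU, hSU, hf, rfl⟩ ⟨g, W, hW, hSW, hg, rfl⟩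
    exact ⟨f * g, U ∩ W, hU.inter hW, Set.subset_inter hSU hSW,
      (hf.mono Set.inter_subset_left).mul (hg.mono Set.inter_subset_right), rfl⟩
  add_mem' := by
    rintro a b ⟨f, U, hU, hSU, hf, rfl⟩ ⟨g, W, hW, hSW, hg, rfl⟩
    exact ⟨f + g, U ∩ W, hU.inter hW, Set.subset_inter hSU hSW,
      (hf.mono Set.inter_subset_left).add (hg.mono Set.inter_subset_right), rfl⟩
  algebraMap_mem' := fun c => ⟨fun _ => c, Set.univ, isOpen_univ, Set.subset_univ _,
    (differentiable_const c).differentiableOn, by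
      rw [Algebra.algebraMap_eq_smul_one, ← Filter.Germ.coe_one (l := 𝓝ˢ S),
        ← Filter.Germ.coe_smul]
      congr 1
      funext z
      simp⟩

/-- Evaluation of a germ along the neighbourhood filter of `S` at a point of `S`. -/
noncomputable def germValue {n : ℕ} {S : Set (Fin n → ℂ)} {x : Fin n → ℂ} (hx : x ∈ S)
    (φ : Filter.Germ (𝓝ˢ S) ℂ) : ℂ :=
  Filter.Germ.liftOn φ (fun f => f x) fun _f _g hfg => subset_of_mem_nhdsSet hfg hx

@[simp] lemma germValue_coe {n : ℕ} {S : Set (Fin n → ℂ)} {x : Fin n → ℂ} (hx : x ∈ S)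
    (f : (Fin n → ℂ) → ℂ) : germValue hx (↑f) = f x := rfl

lemma germValue_mul {n : ℕ} {S : Set (Fin n → ℂ)} {x : Fin n → ℂ} (hx : x ∈ S)
    (φ ψ : Filter.Germ (𝓝ˢ S) ℂ) :
    germValue hx (φ * ψ) = germValue hx φ * germValue hx ψ :=
  Filter.Germ.inductionOn₂ φ ψ fun _f _g => rfl

lemma germValue_one {n : ℕ} {S : Set (Fin n → ℂ)} {x : Fin n → ℂ} (hx : x ∈ S) :
    germValue hx (1 : Filter.Germ (𝓝ˢ S) ℂ) = 1 := rfl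

/-- The multiplicative set of germs of holomorphic functions not vanishing at a given
point `x ∈ S`; the complement of the prime ideal `p_x`. -/
noncomputable def nonvanishingGerms {n : ℕ} (S : Set (Fin n → ℂ)) {x : Fin n → ℂ}
    (hx : x ∈ S) : Submonoid ↥(holGermsOn S) where
  carrier := {f | germValue hx (f : Filter.Germ (𝓝ˢ S) ℂ) ≠ 0}
  one_mem' := by
    simp only [Set.mem_setOf_eq, OneMemClass.coe_one, germValue_one hx]
    exact one_ne_zero
  mul_mem' := by
    intro a b ha hb
    simp only [Set.mem_setOf_eq, MulMemClass.coe_mul, germValue_mul hx] at *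
    exact mul_ne_zero ha hb

lemma coord_mem_holGermsOn {n : ℕ} (S : Set (Fin n → ℂ)) (i : Fin n) :
    (↑(fun z : Fin n → ℂ => z i) : Filter.Germ (𝓝ˢ S) ℂ) ∈ holGermsOn S :=
  ⟨fun z => z i, Set.univ, isOpen_univ, Set.subset_univ _,
    ((ContinuousLinearMap.proj (R := ℂ) (φ := fun _ : Fin n => ℂ)
      i).differentiable).differentiableOn, rfl⟩

/-- Scalar multiplication by a ring element as a `ℂ`-linear endomorphism of a module over
a commutative `ℂ`-algebra. -/
noncomputable def smulEnd {R : Type*} [CommRing R] [Algebra ℂ R] {L : Type*}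
    [AddCommGroup L] [Module ℂ L] [Module R L] [IsScalarTower ℂ R L] (r : R) :
    Module.End ℂ L where
  toFun x := r • x
  map_add' := smul_add r
  map_smul' c x := by
    show r • (c • x) = c • (r • x)
    rw [← algebraMap_smul R c x, ← algebraMap_smul R c (r • x), smul_smul, smul_smul,
      mul_comm]


/-- Taylor's holomorphic functional calculus for a commuting tuple of bounded operators,
as a unital algebra homomorphism defined on the ring of germs of holomorphic functions on
neighbourhoods of the Taylor spectrum, sending coordinate germs to the members of the
tuple and satisfying the spectral mapping property. -/
structure GermCalculus {n : ℕ} {H : Type*} [NormedAddCommGroup H]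
    [InnerProductSpace ℂ H] [CompleteSpace H] (A : Fin n → (H →L[ℂ] H)) : Type _ where
  toFun : ↥(holGermsOn (opTaylorSpectrum A)) → (H →L[ℂ] H)
  map_one' : toFun 1 = 1
  map_add' : ∀ f g, toFun (f + g) = toFun f + toFun g
  map_mul' : ∀ f g, toFun (f * g) = toFun f * toFun g
  map_algebraMap' : ∀ c : ℂ, toFun (algebraMap ℂ _ c) = algebraMap ℂ _ c
  map_coord : ∀ i, toFun ⟨_, coord_mem_holGermsOn (opTaylorSpectrum A) i⟩ = A i
  commutes : ∀ f i, Commute (A i) (toFun f)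
  spectral_mapping : ∀ (m : ℕ) (h : Fin m → ↥(holGermsOn (opTaylorSpectrum A))),
    opTaylorSpectrum (fun j => toFun (h j)) =
      {mu | ∃ x, ∃ hx : x ∈ opTaylorSpectrum A,
        ∀ j, germValue hx ((h j : Filter.Germ (𝓝ˢ (opTaylorSpectrum A)) ℂ)) = mu j}

section Infra

variable {W : Type*} [AddCommGroup W] [Module ℂ W]
variable {X : Type*} [AddCommGroup X] [Module ℂ X]
variable {n : ℕ}

lemma compLeft_koszulD₂ (A : Fin n → Module.End ℂ V) (B : Fin n → Module.End ℂ W)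
    (φ : V →ₗ[ℂ] W) (hφ : ∀ i, φ ∘ₗ A i = B i ∘ₗ φ) (k : ℕ) :
    (φ.compLeft {s : Finset (Fin n) // s.card = k}).comp (koszulD A k)
      = (koszulD B k).comp (φ.compLeft _) := by
  have hpt : ∀ (i : Fin n) (y : V), φ (A i y) = B i (φ y) := fun i y =>
    LinearMap.congr_fun (hφ i) y
  ext f s
  simp only [LinearMap.comp_apply, LinearMap.compLeft_apply, Function.comp_apply, koszulD,
    LinearMap.coe_mk, AddHom.coe_mk, map_sum, map_smul]
  exact Finset.sum_congr rfl fun j _ => by rw [hpt]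

lemma compLeft_koszulDDown₂ (A : Fin n → Module.End ℂ V) (B : Fin n → Module.End ℂ W)
    (φ : V →ₗ[ℂ] W) (hφ : ∀ i, φ ∘ₗ A i = B i ∘ₗ φ) (k : ℕ) :
    (φ.compLeft {s : Finset (Fin n) // s.card = k - 1}).comp (koszulDDown A k)
      = (koszulDDown B k).comp (φ.compLeft _) := by
  cases k with
  | zero => ext f s; simp [koszulDDown]
  | succ k => exact compLeft_koszulD₂ A B φ hφ k

/-- The map on Koszul homology induced by an equivariant linear map. -/
noncomputable def homologyMap (A : Fin n → Module.End ℂ V) (B : Fin n → Module.End ℂ W)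
    (φ : V →ₗ[ℂ] W) (hφ : ∀ i, φ ∘ₗ A i = B i ∘ₗ φ) (k : ℕ) :
    koszulHomology A k →ₗ[ℂ] koszulHomology B k :=
  Submodule.mapQ _ _
    (((φ.compLeft _)).restrict (p := LinearMap.ker (koszulDDown A k))
      (q := LinearMap.ker (koszulDDown B k))
      (fun x hx => by
        have h := LinearMap.congr_fun (compLeft_koszulDDown₂ A B φ hφ k) x
        simp only [LinearMap.comp_apply] at h
        simp only [LinearMap.mem_ker] at hx ⊢
        rw [← h, hx, map_zero]))
    (fun x hx => by
      simp only [Submodule.mem_comap, LinearMap.mem_range] at hx ⊢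
      obtain ⟨y, hy⟩ := hx
      refine ⟨(φ.compLeft _) y, ?_⟩
      have h := LinearMap.congr_fun (compLeft_koszulD₂ A B φ hφ k) y
      simp only [LinearMap.comp_apply] at h
      rw [← h, hy]
      rfl)

lemma compLeft_mem_ker (A : Fin n → Module.End ℂ V) (B : Fin n → Module.End ℂ W)
    (φ : V →ₗ[ℂ] W) (hφ : ∀ i, φ ∘ₗ A i = B i ∘ₗ φ) (k : ℕ)
    {x : {s : Finset (Fin n) // s.card = k} → V} (hx : x ∈ LinearMap.ker (koszulDDown A k)) :
    φ.compLeft _ x ∈ LinearMap.ker (koszulDDown B k) := by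
  have h := LinearMap.congr_fun (compLeft_koszulDDown₂ A B φ hφ k) x
  simp only [LinearMap.comp_apply] at h
  simp only [LinearMap.mem_ker] at hx ⊢
  rw [← h, hx, map_zero]

lemma homologyMap_mk (A : Fin n → Module.End ℂ V) (B : Fin n → Module.End ℂ W)
    (φ : V →ₗ[ℂ] W) (hφ : ∀ i, φ ∘ₗ A i = B i ∘ₗ φ) (k : ℕ)
    (x : LinearMap.ker (koszulDDown A k)) :
    homologyMap A B φ hφ k (Submodule.Quotient.mk x)
      = Submodule.Quotient.mk ⟨φ.compLeft _ x.1, compLeft_mem_ker A B φ hφ k x.2⟩ := by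
  rw [homologyMap, Submodule.mapQ_apply]
  rfl

/-- The equivalence on Koszul homology induced by an equivariant linear equivalence. -/
noncomputable def homologyEquiv (A : Fin n → Module.End ℂ V) (B : Fin n → Module.End ℂ W)
    (e : V ≃ₗ[ℂ] W) (he : ∀ i, (e : V →ₗ[ℂ] W) ∘ₗ A i = B i ∘ₗ (e : V →ₗ[ℂ] W)) (k : ℕ) :
    koszulHomology A k ≃ₗ[ℂ] koszulHomology B k := by
  have he' : ∀ i, (e.symm : W →ₗ[ℂ] V) ∘ₗ B i = A i ∘ₗ (e.symm : W →ₗ[ℂ] V) := by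
    intro i
    ext w
    have := LinearMap.congr_fun (he i) (e.symm w)
    simp only [LinearMap.comp_apply, LinearEquiv.coe_coe] at this ⊢
    rw [e.apply_symm_apply] at this
    rw [← this, e.symm_apply_apply]
  refine LinearEquiv.ofLinear (homologyMap A B e he k) (homologyMap B A e.symm he' k) ?_ ?_
  · apply LinearMap.ext
    intro z
    obtain ⟨x, rfl⟩ := Submodule.Quotient.mk_surjective _ z
    simp only [LinearMap.comp_apply, LinearMap.id_apply]
    rw [homologyMap_mk B A (e.symm : W →ₗ[ℂ] V) he' k x,
      homologyMap_mk A B (e : V →ₗ[ℂ] W) he k _]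
    congr 1
    apply Subtype.ext
    funext s
    simp [LinearMap.compLeft_apply]
  · apply LinearMap.ext
    intro z
    obtain ⟨x, rfl⟩ := Submodule.Quotient.mk_surjective _ z
    simp only [LinearMap.comp_apply, LinearMap.id_apply]
    rw [homologyMap_mk A B (e : V →ₗ[ℂ] W) he k x,
      homologyMap_mk B A (e.symm : W →ₗ[ℂ] V) he' k _]
    congr 1
    apply Subtype.ext
    funext s
    simp [LinearMap.compLeft_apply]

end Infra


section Homotopy

variable {n : ℕ}

lemma attach_sum_eq (t : Finset (Fin n)) (g : Fin n → V)
    (F : (j : Fin n) → j ∈ t → V) (hg : ∀ (j : Fin n) (h : j ∈ t), F j h = g j)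
    (hg0 : ∀ (j : Fin n), j ∉ t → g j = 0) :
    ∑ j ∈ t.attach, F ↑j j.2 = ∑ j : Fin n, g j := by
  have h1 : ∑ j ∈ t.attach, F ↑j j.2 = ∑ j ∈ t.attach, g ↑j :=
    Finset.sum_congr rfl (fun j _ => hg ↑j j.2)
  have h2 : ∑ j ∈ t.attach, g ↑j = ∑ j ∈ t, g j := Finset.sum_attach _ g
  have h3 : ∑ j ∈ t, g j = ∑ j : Fin n, g j :=
    Finset.sum_subset (Finset.subset_univ _) (fun x _ hx => hg0 x hx)
  exact h1.trans (h2.trans h3)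

lemma koszulD_apply (A : Fin n → Module.End ℂ V) (k : ℕ)
    (f : {s : Finset (Fin n) // s.card = k + 1} → V) (s : {s : Finset (Fin n) // s.card = k}) :
    koszulD A k f s = ∑ j : Fin n, (if h : j ∈ (↑s : Finset (Fin n))ᶜ then
      ((-1 : ℂ) ^ ((↑s : Finset (Fin n)).filter (· < j)).card) •
        A j (f ⟨insert j ↑s, by
          rw [Finset.card_insert_of_notMem (Finset.mem_compl.mp h), s.2]⟩)
    else 0) := by
  exact attach_sum_eq ((↑s : Finset (Fin n))ᶜ)
    (fun j => if h : j ∈ (↑s : Finset (Fin n))ᶜ then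
      ((-1 : ℂ) ^ ((↑s : Finset (Fin n)).filter (· < j)).card) •
        A j (f ⟨insert j ↑s, by
          rw [Finset.card_insert_of_notMem (Finset.mem_compl.mp h), s.2]⟩)
    else 0)
    (fun j h => ((-1 : ℂ) ^ ((↑s : Finset (Fin n)).filter (· < j)).card) •
        A j (f ⟨insert j ↑s, by
          rw [Finset.card_insert_of_notMem (Finset.mem_compl.mp h), s.2]⟩))
    (fun j h => by simp only [dif_pos h]) (fun j h => dif_neg h)

/-- The Koszul-complex homotopy: exterior multiplication by the `i`-th basis vector. -/
noncomputable def koszulH (i : Fin n) (k : ℕ) (f : {s : Finset (Fin n) // s.card = k} → V) :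
    {s : Finset (Fin n) // s.card = k + 1} → V := fun t =>
  if h : i ∈ (↑t : Finset (Fin n)) then
    ((-1 : ℂ) ^ (((↑t : Finset (Fin n)).erase i).filter (· < i)).card) •
      f ⟨(↑t : Finset (Fin n)).erase i, by simp [Finset.card_erase_of_mem h, t.2]⟩
  else 0

lemma koszulH_zero (i : Fin n) (k : ℕ) :
    koszulH i k (0 : {s : Finset (Fin n) // s.card = k} → V) = 0 := by
  funext t
  simp only [koszulH]
  split <;> simp

lemma neg_one_pow_mul_self (a : ℕ) : ((-1 : ℂ)) ^ a * ((-1 : ℂ)) ^ a = 1 := by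
  rw [← pow_add]
  exact Even.neg_one_pow ⟨a, rfl⟩

lemma sign_cancel (e : Finset (Fin n)) (i j : Fin n) (hi : i ∉ e) (hj : j ∉ e) (hij : j ≠ i) :
    (-1 : ℂ) ^ ((insert i e).filter (· < j)).card *
        (-1 : ℂ) ^ ((insert j e).filter (· < i)).card
      + (-1 : ℂ) ^ (e.filter (· < i)).card * (-1 : ℂ) ^ (e.filter (· < j)).card = 0 := by
  rw [Finset.filter_insert, Finset.filter_insert]
  rcases hij.lt_or_gt with hlt | hlt
  · rw [if_neg (asymm hlt), if_pos hlt,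
      Finset.card_insert_of_notMem (fun h => hj (Finset.mem_filter.mp h).1), pow_succ]
    ring
  · rw [if_pos hlt, if_neg (asymm hlt),
      Finset.card_insert_of_notMem (fun h => hi (Finset.mem_filter.mp h).1), pow_succ]
    ring

lemma koszulD_koszulH_of_not_mem (B : Fin n → Module.End ℂ V) (i : Fin n) (k : ℕ)
    (f : {s : Finset (Fin n) // s.card = k} → V) (s : {s : Finset (Fin n) // s.card = k})
    (hi : i ∉ (↑s : Finset (Fin n))) :
    koszulD B k (koszulH i k f) s = B i (f s) := by
  rw [koszulD_apply]
  have key : ∀ j : Fin n, (if h : j ∈ (↑s : Finset (Fin n))ᶜ then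
      ((-1 : ℂ) ^ ((↑s : Finset (Fin n)).filter (· < j)).card) •
        B j ((koszulH i k f) ⟨insert j ↑s, by
          rw [Finset.card_insert_of_notMem (Finset.mem_compl.mp h), s.2]⟩)
    else 0) = if j = i then B i (f s) else 0 := by
    intro j
    by_cases hji : j = i
    · subst hji
      rw [dif_pos (Finset.mem_compl.mpr hi), if_pos rfl]
      simp only [koszulH, dif_pos (Finset.mem_insert_self j (↑s : Finset (Fin n))),
        Finset.erase_insert hi]
      rw [map_smul, smul_smul, neg_one_pow_mul_self, one_smul, Subtype.coe_eta]
    · rw [if_neg hji]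
      by_cases hjs : j ∈ (↑s : Finset (Fin n))ᶜ
      · rw [dif_pos hjs]
        have hni : i ∉ insert j (↑s : Finset (Fin n)) := by
          simp only [Finset.mem_insert]
          rintro (rfl | h)
          · exact hji rfl
          · exact hi h
        simp only [koszulH, dif_neg hni, map_zero, smul_zero]
      · rw [dif_neg hjs]
  rw [Finset.sum_congr rfl (fun j _ => key j)]
  simp

lemma koszulH_identity (B : Fin n → Module.End ℂ V) (i : Fin n) (m : ℕ)
    (f : {s : Finset (Fin n) // s.card = m + 1} → V)
    (s : {s : Finset (Fin n) // s.card = m + 1}) :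
    koszulD B (m + 1) (koszulH i (m + 1) f) s + koszulH i m (koszulD B m f) s
      = B i (f s) := by
  by_cases hi : i ∈ (↑s : Finset (Fin n))
  swap
  · rw [koszulD_koszulH_of_not_mem B i (m + 1) f s hi]
    simp only [koszulH, dif_neg hi, add_zero]
  · rw [koszulD_apply]
    rw [show koszulH i m (koszulD B m f) s
        = ((-1 : ℂ) ^ (((↑s : Finset (Fin n)).erase i).filter (· < i)).card) •
          koszulD B m f ⟨(↑s : Finset (Fin n)).erase i, by
            simp [Finset.card_erase_of_mem hi, s.2]⟩ from dif_pos hi]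
    rw [koszulD_apply, Finset.smul_sum, ← Finset.sum_add_distrib]
    have key : ∀ j : Fin n,
        ((if h : j ∈ (↑s : Finset (Fin n))ᶜ then
          ((-1 : ℂ) ^ ((↑s : Finset (Fin n)).filter (· < j)).card) •
            B j ((koszulH i (m + 1) f) ⟨insert j ↑s, by
              rw [Finset.card_insert_of_notMem (Finset.mem_compl.mp h), s.2]⟩)
        else 0)
        + ((-1 : ℂ) ^ (((↑s : Finset (Fin n)).erase i).filter (· < i)).card) •
          (if h : j ∈ ((↑s : Finset (Fin n)).erase i)ᶜ then
            ((-1 : ℂ) ^ (((↑s : Finset (Fin n)).erase i).filter (· < j)).card) •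
              B j (f ⟨insert j ((↑s : Finset (Fin n)).erase i), by
                rw [Finset.card_insert_of_notMem (Finset.mem_compl.mp h),
                  Finset.card_erase_of_mem hi, s.2]
                omega⟩)
          else 0))
        = if j = i then B i (f s) else 0 := by
      intro j
      by_cases hji : j = i
      · subst hji
        rw [dif_neg (by simp [hi]), if_pos rfl, zero_add,
          dif_pos (Finset.mem_compl.mpr (Finset.notMem_erase j _))]
        rw [smul_smul, neg_one_pow_mul_self, one_smul]
        congr 1
        congr 1
        exact Subtype.ext (Finset.insert_erase hi)
      · rw [if_neg hji]
        by_cases hjs : j ∈ (↑s : Finset (Fin n))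
        · rw [dif_neg (by simp [hjs]), dif_neg (by
            simp only [Finset.mem_compl, Finset.mem_erase, not_not]
            exact ⟨hji, hjs⟩), zero_add, smul_zero]
        · rw [dif_pos (Finset.mem_compl.mpr hjs),
            dif_pos (Finset.mem_compl.mpr (fun h => hjs (Finset.mem_of_mem_erase h)))]
          have hins : i ∈ insert j (↑s : Finset (Fin n)) := Finset.mem_insert_of_mem hi
          simp only [koszulH, dif_pos hins]
          have harg : ((insert j (↑s : Finset (Fin n))).erase i)
              = insert j ((↑s : Finset (Fin n)).erase i) :=
            Finset.erase_insert_of_ne hji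
          simp only [map_smul, smul_smul]
          have harg2 : ∀ (h1 : ((insert j (↑s : Finset (Fin n))).erase i).card = m + 1)
              (h2 : (insert j ((↑s : Finset (Fin n)).erase i)).card = m + 1),
              f ⟨(insert j (↑s : Finset (Fin n))).erase i, h1⟩
                = f ⟨insert j ((↑s : Finset (Fin n)).erase i), h2⟩ := by
            intro h1 h2
            congr 1
            exact Subtype.ext harg
          rw [harg2 _ (by
            rw [Finset.card_insert_of_notMem (fun h => hjs (Finset.mem_of_mem_erase h)),
              Finset.card_erase_of_mem hi, s.2]
            omega)]
          rw [← add_smul]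
          have hsgn : (-1 : ℂ) ^ ((↑s : Finset (Fin n)).filter (· < j)).card *
                (-1 : ℂ) ^ (((insert j (↑s : Finset (Fin n))).erase i).filter (· < i)).card
              + (-1 : ℂ) ^ (((↑s : Finset (Fin n)).erase i).filter (· < i)).card *
                (-1 : ℂ) ^ (((↑s : Finset (Fin n)).erase i).filter (· < j)).card = 0 := by
            have hs : (↑s : Finset (Fin n))
                = insert i ((↑s : Finset (Fin n)).erase i) := (Finset.insert_erase hi).symm
            rw [harg]
            nth_rewrite 1 [hs]
            exact sign_cancel ((↑s : Finset (Fin n)).erase i) i j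
              (Finset.notMem_erase i _) (fun h => hjs (Finset.mem_of_mem_erase h)) hji
          rw [hsgn, zero_smul]
    rw [Finset.sum_congr rfl (fun j _ => key j)]
    simp

lemma exact_of_bijective (B : Fin n → Module.End ℂ V) (hB : ∀ i j, Commute (B i) (B j))
    (i : Fin n) (hbij : Function.Bijective (B i)) (k : ℕ)
    (x : {s : Finset (Fin n) // s.card = k} → V) (hx : x ∈ LinearMap.ker (koszulDDown B k)) :
    ∃ y, koszulD B k y = x := by
  let e : V ≃ₗ[ℂ] V := LinearEquiv.ofBijective (B i) hbij
  let Binv : Module.End ℂ V := (e.symm : V →ₗ[ℂ] V)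
  have hBinv : ∀ v, B i (Binv v) = v := fun v => e.apply_symm_apply v
  have hBinv' : ∀ v, Binv (B i v) = v := fun v => e.symm_apply_apply v
  have hcomm : ∀ j, Commute Binv (B j) := by
    intro j
    apply LinearMap.ext
    intro w
    apply hbij.injective
    show B i (Binv ((B j) w)) = B i ((B j) (Binv w))
    rw [hBinv]
    have h2 := LinearMap.congr_fun ((hB i j).eq) (Binv w)
    simp only [Module.End.mul_apply] at h2
    rw [h2, hBinv]
  cases k with
  | zero =>
    refine ⟨koszulH i 0 (Binv.compLeft _ x), ?_⟩
    funext s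
    have hi : i ∉ (↑s : Finset (Fin n)) := by
      have h0 : (↑s : Finset (Fin n)) = ∅ := Finset.card_eq_zero.mp s.2
      simp [h0]
    rw [koszulD_koszulH_of_not_mem B i 0 _ s hi]
    show B i (Binv (x s)) = x s
    exact hBinv _
  | succ m =>
    refine ⟨Binv.compLeft _ (koszulH i (m + 1) x), ?_⟩
    have hchain := LinearMap.congr_fun (compLeft_koszulD B Binv hcomm (m + 1))
      (koszulH i (m + 1) x)
    simp only [LinearMap.comp_apply] at hchain
    rw [← hchain]
    have hker : koszulD B m x = 0 := hx
    funext s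
    have hid := koszulH_identity B i m x s
    rw [hker, koszulH_zero] at hid
    simp only [Pi.zero_apply, add_zero] at hid
    show Binv (koszulD B (m + 1) (koszulH i (m + 1) x) s) = x s
    rw [hid, hBinv']

end Homotopy

section Splitting

variable {n : ℕ}

/-- The restriction of a tuple to an invariant submodule. -/
noncomputable def resTuple (B : Fin n → Module.End ℂ V) (p : Submodule ℂ V)
    (hp : ∀ i, ∀ x ∈ p, B i x ∈ p) : Fin n → Module.End ℂ ↥p :=
  fun i => (B i).restrict (hp i)

lemma restrictEnd_eq (p : Submodule ℂ V) (T : Module.End ℂ V) (h : ∀ x ∈ p, T x ∈ p) :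
    restrictEnd p T = T.restrict h := dif_pos h

lemma subtype_equivariant (B : Fin n → Module.End ℂ V) (p : Submodule ℂ V)
    (hp : ∀ i, ∀ x ∈ p, B i x ∈ p) (i : Fin n) :
    p.subtype ∘ₗ (resTuple B p hp i) = B i ∘ₗ p.subtype :=
  LinearMap.ext fun _ => rfl

lemma proj_equivariant (B : Fin n → Module.End ℂ V) (p q : Submodule ℂ V)
    (hp : ∀ i, ∀ x ∈ p, B i x ∈ p) (hq : ∀ i, ∀ x ∈ q, B i x ∈ q) (hc : IsCompl p q)
    (i : Fin n) :
    (p.linearProjOfIsCompl q hc) ∘ₗ B i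
      = (resTuple B p hp i) ∘ₗ (p.linearProjOfIsCompl q hc) := by
  apply LinearMap.ext
  intro w
  have hw : (↑(p.linearProjOfIsCompl q hc w) : V) + ↑(q.linearProjOfIsCompl p hc.symm w) = w :=
    Submodule.projection_add_projection_eq_self hc w
  simp only [LinearMap.comp_apply]
  have hsplit : B i w = ↑((resTuple B p hp i) (p.linearProjOfIsCompl q hc w))
      + ↑((resTuple B q hq i) (q.linearProjOfIsCompl p hc.symm w)) := by
    show B i w = B i ↑(p.linearProjOfIsCompl q hc w) + B i ↑(q.linearProjOfIsCompl p hc.symm w)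
    rw [← map_add, hw]
  rw [hsplit, map_add]
  rw [show p.linearProjOfIsCompl q hc = p.projectionOnto q hc from rfl,
    show q.linearProjOfIsCompl p hc.symm = q.projectionOnto p hc.symm from rfl]
  rw [Submodule.linearProjOfIsCompl_apply_left hc,
    Submodule.linearProjOfIsCompl_apply_right' hc
      ((resTuple B q hq i) ((q.projectionOnto p hc.symm) w)).2]
  simp

lemma split_iso (B : Fin n → Module.End ℂ V) (p q : Submodule ℂ V)
    (hp : ∀ i, ∀ x ∈ p, B i x ∈ p) (hq : ∀ i, ∀ x ∈ q, B i x ∈ q) (hc : IsCompl p q)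
    (hex : ∀ (k : ℕ) (x : {s : Finset (Fin n) // s.card = k} → ↥q),
      x ∈ LinearMap.ker (koszulDDown (resTuple B q hq) k) →
        ∃ y, koszulD (resTuple B q hq) k y = x)
    (k : ℕ) : Nonempty (koszulHomology (resTuple B p hp) k ≃ₗ[ℂ] koszulHomology B k) := by
  set Bp := resTuple B p hp with hBp
  set Bq := resTuple B q hq with hBq
  have hφ : ∀ i, p.subtype ∘ₗ Bp i = B i ∘ₗ p.subtype := subtype_equivariant B p hp
  have hφq : ∀ i, q.subtype ∘ₗ Bq i = B i ∘ₗ q.subtype := subtype_equivariant B q hq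
  set πp := p.linearProjOfIsCompl q hc with hπp
  set πq := q.linearProjOfIsCompl p hc.symm with hπq
  have hπ : ∀ i, πp ∘ₗ B i = Bp i ∘ₗ πp := proj_equivariant B p q hp hq hc
  have hπ' : ∀ i, πq ∘ₗ B i = Bq i ∘ₗ πq := proj_equivariant B q p hq hp hc.symm
  set F := homologyMap Bp B p.subtype hφ k with hF
  have hinj : ∀ z, F z = 0 → z = 0 := by
    intro z hz
    obtain ⟨x, rfl⟩ := Submodule.Quotient.mk_surjective _ z
    rw [homologyMap_mk] at hz
    rw [Submodule.Quotient.mk_eq_zero] at hz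
    simp only [Submodule.mem_comap, LinearMap.mem_range] at hz
    obtain ⟨y, hy⟩ := hz
    rw [Submodule.Quotient.mk_eq_zero]
    simp only [Submodule.mem_comap, LinearMap.mem_range]
    refine ⟨πp.compLeft _ y, ?_⟩
    have hch := LinearMap.congr_fun (compLeft_koszulD₂ B Bp πp hπ k) y
    simp only [LinearMap.comp_apply] at hch
    rw [← hch, hy]
    show πp.compLeft _ (p.subtype.compLeft _ x.1) = x.1
    funext t
    simp only [LinearMap.compLeft_apply, Submodule.coe_subtype]
    exact Submodule.linearProjOfIsCompl_apply_left hc (x.1 t)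
  have hsurj : Function.Surjective F := by
    intro z
    obtain ⟨x, rfl⟩ := Submodule.Quotient.mk_surjective _ z
    have hxp : πp.compLeft _ x.1 ∈ LinearMap.ker (koszulDDown Bp k) :=
      compLeft_mem_ker B Bp πp hπ k x.2
    have hxq : πq.compLeft _ x.1 ∈ LinearMap.ker (koszulDDown Bq k) :=
      compLeft_mem_ker B Bq πq hπ' k x.2
    obtain ⟨u, hu⟩ := hex k _ hxq
    refine ⟨Submodule.Quotient.mk ⟨πp.compLeft _ x.1, hxp⟩, ?_⟩
    rw [homologyMap_mk]
    rw [Submodule.Quotient.eq]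
    simp only [Submodule.mem_comap, LinearMap.mem_range]
    refine ⟨-(q.subtype.compLeft _ u), ?_⟩
    have hch := LinearMap.congr_fun (compLeft_koszulD₂ Bq B q.subtype hφq k) u
    simp only [LinearMap.comp_apply] at hch
    rw [map_neg, ← hch, hu]
    funext t
    simp only [LinearMap.compLeft_apply, Submodule.coe_subtype, AddSubgroupClass.coe_sub,
      Pi.sub_apply, Pi.neg_apply, Function.comp_apply]
    have hid : (↑(πp (x.1 t)) : V) + ↑(πq (x.1 t)) = x.1 t :=
      Submodule.projection_add_projection_eq_self hc (x.1 t)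
    generalize hA : (↑(πp (x.1 t)) : V) = a at hid ⊢
    generalize hB : (↑(πq (x.1 t)) : V) = b at hid ⊢
    rw [← hid]
    abel
  have hbij : Function.Bijective F := by
    constructor
    · rw [← LinearMap.ker_eq_bot]
      exact LinearMap.ker_eq_bot'.mpr (fun m hm => hinj m hm)
    · exact hsurj
  exact ⟨LinearEquiv.ofBijective F hbij⟩

end Splitting

section TopDegree

variable {n : ℕ}

lemma isEmpty_top_index : IsEmpty {s : Finset (Fin n) // s.card = n + 1} := by
  constructor
  intro s
  have h1 := Finset.card_le_univ s.1
  rw [s.2, Fintype.card_fin] at h1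
  omega

lemma card_n_eq_univ (t : {s : Finset (Fin n) // s.card = n}) : t.1 = Finset.univ :=
  Finset.eq_univ_of_card _ (by rw [t.2, Fintype.card_fin])

lemma subsingleton_top_index : Subsingleton {s : Finset (Fin n) // s.card = n} :=
  ⟨fun a b => Subtype.ext (by rw [card_n_eq_univ a, card_n_eq_univ b])⟩

lemma range_koszulD_top (B : Fin n → Module.End ℂ V) :
    LinearMap.range (koszulD B n) = ⊥ := by
  haveI := isEmpty_top_index (n := n)
  rw [eq_bot_iff]
  rintro x ⟨y, rfl⟩
  haveI : Unique ({s : Finset (Fin n) // s.card = n + 1} → V) := Pi.uniqueOfIsEmpty _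
  rw [Subsingleton.elim y 0, map_zero]
  exact Submodule.zero_mem ⊥

lemma mem_ker_top_iff (B : Fin n → Module.End ℂ V)
    (x : {s : Finset (Fin n) // s.card = n} → V) :
    x ∈ LinearMap.ker (koszulDDown B n)
      ↔ ∀ i, B i (x ⟨Finset.univ, by rw [Finset.card_univ, Fintype.card_fin]⟩) = 0 := by
  haveI := subsingleton_top_index (n := n)
  cases n with
  | zero =>
    constructor
    · intro _ i
      exact i.elim0
    · intro _
      simp [koszulDDown]
  | succ m =>
    constructor
    · intro hx i
      have h : (koszulD B m) x
          (⟨Finset.univ.erase i, by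
            rw [Finset.card_erase_of_mem (Finset.mem_univ i), Finset.card_univ,
              Fintype.card_fin]
            omega⟩ : {s : Finset (Fin (m + 1)) // s.card = m}) = 0 :=
        congrFun (LinearMap.mem_ker.mp hx) _
      rw [koszulD_apply] at h
      have hxeq : ∀ t : {s : Finset (Fin (m + 1)) // s.card = m + 1},
          x t = x ⟨Finset.univ, by rw [Finset.card_univ, Fintype.card_fin]⟩ :=
        fun t => congrArg x (Subsingleton.elim _ _)
      have key : ∀ j : Fin (m + 1), (if hmem : j ∈ ((Finset.univ.erase i : Finset (Fin (m+1))))ᶜ then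
          ((-1 : ℂ) ^ (((Finset.univ.erase i : Finset (Fin (m+1)))).filter (· < j)).card) •
            B j (x ⟨insert j (Finset.univ.erase i), by
              rw [Finset.card_insert_of_notMem (Finset.mem_compl.mp hmem),
                Finset.card_erase_of_mem (Finset.mem_univ i), Finset.card_univ,
                Fintype.card_fin]
              omega⟩)
        else 0)
          = if j = i then ((-1 : ℂ) ^
              (((Finset.univ.erase i : Finset (Fin (m+1)))).filter (· < i)).card) •
            B i (x ⟨Finset.univ, by rw [Finset.card_univ, Fintype.card_fin]⟩) else 0 := by
        intro j
        by_cases hji : j = i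
        · subst hji
          rw [dif_pos (Finset.mem_compl.mpr (Finset.notMem_erase j _)), if_pos rfl, hxeq]
        · rw [if_neg hji, dif_neg]
          simp only [Finset.mem_compl, Finset.mem_erase, not_not]
          exact ⟨hji, Finset.mem_univ j⟩
      rw [Finset.sum_congr rfl (fun j _ => key j)] at h
      simp only [Finset.sum_ite_eq', Finset.mem_univ, if_pos] at h
      rcases smul_eq_zero.mp h with hc | hv
      · exact absurd hc (pow_ne_zero _ (by norm_num))
      · exact hv
    · intro hx
      have hxall : ∀ (t : {s : Finset (Fin (m + 1)) // s.card = m + 1}) (j : Fin (m + 1)),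
          B j (x t) = 0 := fun t j => by
        rw [Subsingleton.elim t
          ⟨Finset.univ, by rw [Finset.card_univ, Fintype.card_fin]⟩]
        exact hx j
      apply LinearMap.mem_ker.mpr
      have hz : (koszulD B m) x = (0 : {s : Finset (Fin (m + 1)) // s.card = m} → V) := by
        funext s
        rw [koszulD_apply]
        rw [Finset.sum_eq_zero, Pi.zero_apply]
        intro j _
        split
        · rw [hxall _ j, smul_zero]
        · rfl
      exact hz

/-- The top Koszul homology is the joint kernel. -/
noncomputable def topHomologyEquiv (B : Fin n → Module.End ℂ V) :
    koszulHomology B n ≃ₗ[ℂ] ↥(⨅ i, LinearMap.ker (B i)) := by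
  haveI := subsingleton_top_index (n := n)
  refine LinearEquiv.trans
    (Submodule.quotEquivOfEqBot
      (Submodule.comap (LinearMap.ker (koszulDDown B n)).subtype
        (LinearMap.range (koszulD B n)))
      (by rw [range_koszulD_top, Submodule.comap_bot, Submodule.ker_subtype]))
    (
    { toFun := fun x => ⟨x.1 ⟨Finset.univ, by rw [Finset.card_univ, Fintype.card_fin]⟩, by
        rw [Submodule.mem_iInf]
        exact fun i => LinearMap.mem_ker.mpr ((mem_ker_top_iff B x.1).mp x.2 i)⟩
      map_add' := fun x y => rfl
      map_smul' := fun c x => rfl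
      invFun := fun y => ⟨fun _ => ↑y, (mem_ker_top_iff B _).mpr (fun i =>
        LinearMap.mem_ker.mp ((Submodule.mem_iInf _).mp y.2 i))⟩
      left_inv := fun x => Subtype.ext (funext fun s => congrArg x.1 (Subsingleton.elim _ _))
      right_inv := fun y => Subtype.ext rfl })

end TopDegree

section GenEig

variable {n : ℕ}

lemma mem_iSup_ker_pow_iff (T : Module.End ℂ V) (x : V) :
    (x ∈ ⨆ p : ℕ, LinearMap.ker (T ^ p)) ↔ ∃ p, x ∈ LinearMap.ker (T ^ p) := by
  have hmono : Monotone (fun p : ℕ => LinearMap.ker (T ^ p)) := by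
    intro a b hab
    intro y hy
    simp only [LinearMap.mem_ker] at hy ⊢
    rw [← Nat.sub_add_cancel hab, pow_add, Module.End.mul_apply, hy, map_zero]
  exact Submodule.mem_iSup_of_chain ⟨_, hmono⟩ x

lemma mapsTo_iSup_ker_pow {S T : Module.End ℂ V} (h : Commute S T) {x : V}
    (hx : x ∈ ⨆ p : ℕ, LinearMap.ker (T ^ p)) :
    S x ∈ ⨆ p : ℕ, LinearMap.ker (T ^ p) := by
  rw [mem_iSup_ker_pow_iff] at hx ⊢
  obtain ⟨p, hp⟩ := hx
  refine ⟨p, LinearMap.mem_ker.mpr ?_⟩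
  have hcomm := LinearMap.congr_fun ((h.pow_right p).eq) x
  simp only [Module.End.mul_apply] at hcomm
  rw [← hcomm, LinearMap.mem_ker.mp hp, map_zero]

lemma mapsTo_iInf_range_pow {S T : Module.End ℂ V} (h : Commute S T) {x : V}
    (hx : x ∈ ⨅ p : ℕ, LinearMap.range (T ^ p)) :
    S x ∈ ⨅ p : ℕ, LinearMap.range (T ^ p) := by
  rw [Submodule.mem_iInf] at hx ⊢
  intro p
  obtain ⟨y, hy⟩ := hx p
  refine ⟨S y, ?_⟩
  have hcomm := LinearMap.congr_fun ((h.pow_right p).eq) y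
  simp only [Module.End.mul_apply] at hcomm
  rw [← hcomm, hy]

lemma mapsTo_jointGen (B : Fin n → Module.End ℂ V) (hB : ∀ i j, Commute (B i) (B j))
    (i : Fin n) : ∀ x ∈ (⨅ i', ⨆ p : ℕ, LinearMap.ker (B i' ^ p)),
      B i x ∈ (⨅ i', ⨆ p : ℕ, LinearMap.ker (B i' ^ p)) := by
  intro x hx
  rw [Submodule.mem_iInf] at hx ⊢
  exact fun i' => mapsTo_iSup_ker_pow (hB i i') (hx i')

lemma resTuple_commute (B : Fin n → Module.End ℂ V) (p : Submodule ℂ V)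
    (hp : ∀ i, ∀ x ∈ p, B i x ∈ p) (hB : ∀ i j, Commute (B i) (B j)) (i j : Fin n) :
    Commute (resTuple B p hp i) (resTuple B p hp j) := by
  apply LinearMap.ext
  intro x
  apply Subtype.ext
  show B i (B j ↑x) = B j (B i ↑x)
  have := LinearMap.congr_fun ((hB i j).eq) ↑x
  simpa [Module.End.mul_apply] using this

end GenEig

section Fitting

universe uW

set_option maxHeartbeats 2000000 in
lemma aux_reduction (n m : ℕ) :
    ∀ (W : Type uW) [AddCommGroup W] [Module ℂ W] [FiniteDimensional ℂ W]
      (B : Fin n → Module.End ℂ W), (∀ i j, Commute (B i) (B j)) →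
      (∀ i : Fin n, m ≤ (i : ℕ) → (⨆ p : ℕ, LinearMap.ker (B i ^ p)) = ⊤) →
      ∀ k, Nonempty (koszulHomology B k ≃ₗ[ℂ]
        koszulHomology
          (fun i => restrictEnd (⨅ i', ⨆ p : ℕ, LinearMap.ker (B i' ^ p)) (B i)) k) := by
  induction m with
  | zero =>
    intro W _ _ _ B hB hnil k
    have hV0 : (⨅ i', ⨆ p : ℕ, LinearMap.ker (B i' ^ p)) = (⊤ : Submodule ℂ W) :=
      iInf_eq_top.mpr fun i => hnil i (Nat.zero_le _)
    rw [hV0]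
    have htop : ∀ i, ∀ x ∈ (⊤ : Submodule ℂ W), B i x ∈ (⊤ : Submodule ℂ W) :=
      fun i x _ => Submodule.mem_top
    have heq : (fun i => restrictEnd (⊤ : Submodule ℂ W) (B i)) = resTuple B ⊤ htop :=
      funext fun i => restrictEnd_eq _ _ (htop i)
    rw [heq]
    refine ⟨homologyEquiv B (resTuple B ⊤ htop) Submodule.topEquiv.symm ?_ k⟩
    intro i
    apply LinearMap.ext
    intro w
    apply Subtype.ext
    rfl
  | succ m ih =>
    intro W _ _ _ B hB hnil k
    by_cases hmn : n ≤ m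
    · exact ih W B hB (fun i h' => absurd i.isLt (by omega)) k
    · push_neg at hmn
      set i₀ : Fin n := ⟨m, hmn⟩ with hi₀
      obtain ⟨N, ⟨hK, hR⟩, hN1⟩ := (((B i₀).eventually_iSup_ker_pow_eq.and
        (LinearMap.eventually_iInf_range_pow_eq (B i₀))).and
        (Filter.eventually_ge_atTop 1)).exists
      set K : Submodule ℂ W := ⨆ p : ℕ, LinearMap.ker (B i₀ ^ p) with hKdef
      set Q : Submodule ℂ W := ⨅ p : ℕ, LinearMap.range (B i₀ ^ p) with hQdef
      have hpK : ∀ i, ∀ x ∈ K, B i x ∈ K := fun i x hx => mapsTo_iSup_ker_pow (hB i i₀) hx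
      have hpQ : ∀ i, ∀ x ∈ Q, B i x ∈ Q := fun i x hx => mapsTo_iInf_range_pow (hB i i₀) hx
      have hcompl : IsCompl K Q := LinearMap.isCompl_iSup_ker_pow_iInf_range_pow (B i₀)
      have hKmem : ∀ w : W, w ∈ K ↔ w ∈ LinearMap.ker (B i₀ ^ N) := fun w => by rw [hK]
      have hQmem : ∀ w : W, w ∈ Q ↔ w ∈ LinearMap.range (B i₀ ^ N) := fun w => by rw [hR]
      have hbij : Function.Bijective (resTuple B Q hpQ i₀) := by
        constructor
        · apply LinearMap.ker_eq_bot.mp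
          rw [eq_bot_iff]
          intro a ha
          have ha' : B i₀ (↑a : W) = 0 := congrArg Subtype.val (LinearMap.mem_ker.mp ha)
          have h1 : (↑a : W) ∈ LinearMap.ker (B i₀ ^ N) := by
            apply LinearMap.mem_ker.mpr
            rw [show N = (N - 1) + 1 from (Nat.succ_pred_eq_of_pos hN1).symm, pow_succ,
              Module.End.mul_apply, ha', map_zero]
          have h2 : (↑a : W) ∈ LinearMap.range (B i₀ ^ N) :=
            (Submodule.mem_iInf _).mp a.2 N
          have hz : (↑a : W) = 0 := Submodule.disjoint_def.mp hcompl.disjoint ↑a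
            ((hKmem ↑a).mpr h1) a.2
          exact (Submodule.mem_bot ℂ).mpr (Subtype.ext hz)
        · intro y
          obtain ⟨z, hz⟩ := (Submodule.mem_iInf _).mp y.2 (N + 1)
          have hmem : (B i₀ ^ N) z ∈ Q := (hQmem _).mpr ⟨z, rfl⟩
          refine ⟨⟨(B i₀ ^ N) z, hmem⟩, ?_⟩
          apply Subtype.ext
          show B i₀ ((B i₀ ^ N) z) = ↑y
          rw [← Module.End.mul_apply, ← pow_succ']
          exact hz
      have hex : ∀ (k' : ℕ) (x : {s : Finset (Fin n) // s.card = k'} → ↥Q),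
          x ∈ LinearMap.ker (koszulDDown (resTuple B Q hpQ) k') →
            ∃ y, koszulD (resTuple B Q hpQ) k' y = x :=
        fun k' x hx => exact_of_bijective _ (resTuple_commute B Q hpQ hB) i₀ hbij k' x hx
      obtain ⟨e₁⟩ := split_iso B K Q hpK hpQ hcompl hex k
      have hker' : ∀ (i : Fin n) (p : ℕ), LinearMap.ker ((resTuple B K hpK i) ^ p)
          = Submodule.comap K.subtype (LinearMap.ker (B i ^ p)) := by
        intro i p
        simp only [resTuple]
        rw [Module.End.pow_restrict p (hpK i), LinearMap.ker_restrict]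
      have hcond : ∀ i : Fin n, m ≤ (i : ℕ) →
          (⨆ p : ℕ, LinearMap.ker ((resTuple B K hpK i) ^ p)) = ⊤ := by
        intro i hmi
        rw [eq_top_iff]
        intro x _
        rw [mem_iSup_ker_pow_iff]
        rcases eq_or_lt_of_le hmi with heq | hlt
        · have hval : (i₀ : ℕ) = m := rfl
          have hii : i = i₀ := Fin.ext (by omega)
          obtain ⟨p, hp⟩ := (mem_iSup_ker_pow_iff (B i₀) (↑x : W)).mp x.2
          refine ⟨p, ?_⟩
          rw [hker' i p]
          exact Submodule.mem_comap.mpr (by rw [hii]; exact hp)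
        · have hsup := hnil i hlt
          have hx : (↑x : W) ∈ (⨆ p : ℕ, LinearMap.ker (B i ^ p)) := by
            rw [hsup]; trivial
          obtain ⟨p, hp⟩ := (mem_iSup_ker_pow_iff _ _).mp hx
          refine ⟨p, ?_⟩
          rw [hker' i p]
          exact Submodule.mem_comap.mpr hp
      obtain ⟨e₂⟩ := ih ↥K (resTuple B K hpK) (resTuple_commute B K hpK hB) hcond k
      set V0 : Submodule ℂ W := ⨅ i', ⨆ p : ℕ, LinearMap.ker (B i' ^ p) with hV0def
      set S' : Submodule ℂ ↥K :=
        ⨅ i', ⨆ p : ℕ, LinearMap.ker ((resTuple B K hpK i') ^ p) with hS'def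
      have hle : V0 ≤ K := iInf_le _ i₀
      have hV0' : S' = Submodule.comap K.subtype V0 := by
        apply Submodule.ext
        intro x
        rw [hS'def, Submodule.mem_comap, Submodule.mem_iInf, hV0def, Submodule.mem_iInf]
        refine forall_congr' fun i => ?_
        rw [mem_iSup_ker_pow_iff, mem_iSup_ker_pow_iff]
        refine exists_congr fun p => ?_
        rw [hker' i p, Submodule.mem_comap]
      have hinv0 : ∀ i, ∀ x ∈ V0, B i x ∈ V0 := mapsTo_jointGen B hB
      have hmemS' : ∀ x : ↥K, x ∈ S' ↔ (↑x : W) ∈ V0 := fun x => by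
        rw [hV0']
        exact Submodule.mem_comap
      have hinvS' : ∀ i, ∀ x ∈ S', (resTuple B K hpK i) x ∈ S' := by
        intro i x hx
        rw [hmemS'] at hx ⊢
        exact hinv0 i ↑x hx
      have he : ∀ i, (((LinearEquiv.ofEq S' (Submodule.comap K.subtype V0) hV0').trans
            (Submodule.comapSubtypeEquivOfLe hle) : ↥S' ≃ₗ[ℂ] ↥V0) : ↥S' →ₗ[ℂ] ↥V0) ∘ₗ
          restrictEnd S' (resTuple B K hpK i)
          = restrictEnd V0 (B i) ∘ₗ
            (((LinearEquiv.ofEq S' (Submodule.comap K.subtype V0) hV0').trans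
              (Submodule.comapSubtypeEquivOfLe hle) : ↥S' ≃ₗ[ℂ] ↥V0) : ↥S' →ₗ[ℂ] ↥V0) := by
        intro i
        rw [restrictEnd_eq _ _ (hinvS' i), restrictEnd_eq _ _ (hinv0 i)]
        apply LinearMap.ext
        intro x
        apply Subtype.ext
        rfl
      have e₃ := homologyEquiv _ _
        ((LinearEquiv.ofEq S' (Submodule.comap K.subtype V0) hV0').trans
          (Submodule.comapSubtypeEquivOfLe hle)) he k
      exact ⟨(e₁.symm.trans e₂).trans e₃⟩

end Fitting

section JointKernel

variable {n : ℕ}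

lemma joint_ker_ne_bot [FiniteDimensional ℂ V] (A : Fin n → Module.End ℂ V)
    (hA : ∀ i j, Commute (A i) (A j))
    (h0 : (⨅ i', ⨆ p : ℕ, LinearMap.ker (A i' ^ p)) ≠ ⊥) :
    (⨅ i, LinearMap.ker (A i)) ≠ ⊥ := by
  classical
  have key : ∀ t : Finset (Fin n), ∀ p : Submodule ℂ V, p ≠ ⊥ →
      (∀ i, ∀ x ∈ p, A i x ∈ p) → p ≤ (⨅ i', ⨆ q : ℕ, LinearMap.ker (A i' ^ q)) →
      p ⊓ (⨅ i ∈ t, LinearMap.ker (A i)) ≠ ⊥ := by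
    intro t
    induction t using Finset.induction_on with
    | empty =>
      intro p hp _ _
      simpa using hp
    | @insert j t hj ih =>
      intro p hp hinv hle
      obtain ⟨N, hN⟩ := (A j).eventually_iSup_ker_pow_eq.exists
      have hpnil : ∀ x ∈ p, ((A j) ^ N) x = 0 := by
        intro x hx
        have hx2 : x ∈ ⨆ q : ℕ, LinearMap.ker ((A j) ^ q) := (le_trans hle (iInf_le _ j)) hx
        rw [hN] at hx2
        exact LinearMap.mem_ker.mp hx2
      obtain ⟨x, hxp, hx0⟩ := (Submodule.ne_bot_iff p).mp hp
      have hex : ∃ q : ℕ, ((A j) ^ q) x = 0 := ⟨N, hpnil x hxp⟩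
      have hc0 : Nat.find hex ≠ 0 := by
        intro h
        have hsp := Nat.find_spec hex
        rw [h, pow_zero, Module.End.one_apply] at hsp
        exact hx0 hsp
      have hspec : ((A j) ^ Nat.find hex) x = 0 := Nat.find_spec hex
      have hmin : ((A j) ^ (Nat.find hex - 1)) x ≠ 0 :=
        Nat.find_min hex (by omega)
      have hyp : ((A j) ^ (Nat.find hex - 1)) x ∈ p :=
        Module.End.pow_apply_mem_of_forall_mem (f' := A j) (Nat.find hex - 1) (hinv j) x hxp
      have hyk : A j (((A j) ^ (Nat.find hex - 1)) x) = 0 := by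
        rw [← Module.End.mul_apply, ← pow_succ', show Nat.find hex - 1 + 1 = Nat.find hex
          from by omega]
        exact hspec
      have hp' : p ⊓ LinearMap.ker (A j) ≠ ⊥ := by
        apply (Submodule.ne_bot_iff _).mpr
        exact ⟨((A j) ^ (Nat.find hex - 1)) x,
          Submodule.mem_inf.mpr ⟨hyp, LinearMap.mem_ker.mpr hyk⟩, hmin⟩
      have hinv' : ∀ i, ∀ z ∈ p ⊓ LinearMap.ker (A j), A i z ∈ p ⊓ LinearMap.ker (A j) := by
        intro i z hz
        rcases Submodule.mem_inf.mp hz with ⟨hz1, hz2⟩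
        refine Submodule.mem_inf.mpr ⟨hinv i z hz1, ?_⟩
        rw [LinearMap.mem_ker] at hz2 ⊢
        have hco := LinearMap.congr_fun ((hA j i).eq) z
        simp only [Module.End.mul_apply] at hco
        rw [hco, hz2, map_zero]
      have hrec := ih (p ⊓ LinearMap.ker (A j)) hp' hinv' (le_trans inf_le_left hle)
      rw [Finset.iInf_insert, ← inf_assoc]
      exact hrec
  have hfin := key Finset.univ _ h0 (mapsTo_jointGen A hA) le_rfl
  intro hbot
  apply hfin
  apply le_bot_iff.mp
  rw [← hbot]
  refine le_trans inf_le_right ?_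
  exact le_iInf fun i => iInf₂_le i (Finset.mem_univ i)

end JointKernel

/-- **Koszul homology of a commuting tuple on a finite dimensional space.** For a
commuting tuple `A` on a finite dimensional complex vector space `V`, with `V(0)` the
joint generalized eigenspace of `A` at `0`, the homology `H_k(A, V)` is isomorphic to
`H_k(A, V(0))` for every `k`; moreover `H_n(A, V(0)) ≅ ∩ᵢ Ker(A_i)`, and this space is
nonzero if and only if `V(0) ≠ 0`. -/
theorem homology_concentrated_on_generalized_eigenspace
    {V : Type*} [AddCommGroup V] [Module ℂ V] [FiniteDimensional ℂ V] {n : ℕ}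
    (A : Fin n → Module.End ℂ V) (hA : ∀ i j, Commute (A i) (A j)) :
    (∀ k, Nonempty (koszulHomology A k ≃ₗ[ℂ]
      koszulHomology
        (fun i => restrictEnd (⨅ i', ⨆ p : ℕ, LinearMap.ker (A i' ^ p)) (A i)) k)) ∧
    Nonempty (koszulHomology
        (fun i => restrictEnd (⨅ i', ⨆ p : ℕ, LinearMap.ker (A i' ^ p)) (A i)) n ≃ₗ[ℂ]
      ↥(⨅ i, LinearMap.ker (A i))) ∧
    (Nontrivial (koszulHomology
        (fun i => restrictEnd (⨅ i', ⨆ p : ℕ, LinearMap.ker (A i' ^ p)) (A i)) n) ↔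
      (⨅ i', ⨆ p : ℕ, LinearMap.ker (A i' ^ p)) ≠ ⊥) := by
  have hinv0 : ∀ i, ∀ x ∈ (⨅ i', ⨆ p : ℕ, LinearMap.ker (A i' ^ p)),
      A i x ∈ (⨅ i', ⨆ p : ℕ, LinearMap.ker (A i' ^ p)) := mapsTo_jointGen A hA
  have part1 : ∀ k, Nonempty (koszulHomology A k ≃ₗ[ℂ]
      koszulHomology
        (fun i => restrictEnd (⨅ i', ⨆ p : ℕ, LinearMap.ker (A i' ^ p)) (A i)) k) :=
    fun k => aux_reduction n n V A hA (fun i h' => absurd i.isLt (by omega)) k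
  have heq : (fun i => restrictEnd (⨅ i', ⨆ p : ℕ, LinearMap.ker (A i' ^ p)) (A i))
      = resTuple A (⨅ i', ⨆ p : ℕ, LinearMap.ker (A i' ^ p)) hinv0 :=
    funext fun i => restrictEnd_eq _ _ (hinv0 i)
  have hle2 : (⨅ i, LinearMap.ker (A i)) ≤ (⨅ i', ⨆ p : ℕ, LinearMap.ker (A i' ^ p)) :=
    le_iInf fun i' => le_trans (iInf_le _ i') (by
      intro x hx
      rw [mem_iSup_ker_pow_iff]
      exact ⟨1, by rw [pow_one]; exact hx⟩)
  have hkerres : (⨅ i, LinearMap.ker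
        (resTuple A (⨅ i', ⨆ p : ℕ, LinearMap.ker (A i' ^ p)) hinv0 i))
      = Submodule.comap (⨅ i', ⨆ p : ℕ, LinearMap.ker (A i' ^ p)).subtype
          (⨅ i, LinearMap.ker (A i)) := by
    apply Submodule.ext
    intro x
    rw [Submodule.mem_iInf, Submodule.mem_comap, Submodule.mem_iInf]
    refine forall_congr' fun i => ?_
    simp only [LinearMap.mem_ker]
    constructor
    · intro h
      exact congrArg Subtype.val h
    · intro h
      exact Subtype.ext h
  have e2 : koszulHomology
      (fun i => restrictEnd (⨅ i', ⨆ p : ℕ, LinearMap.ker (A i' ^ p)) (A i)) n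
        ≃ₗ[ℂ] ↥(⨅ i, LinearMap.ker (A i)) := by
    rw [heq]
    exact (topHomologyEquiv (resTuple A (⨅ i', ⨆ p : ℕ, LinearMap.ker (A i' ^ p)) hinv0)).trans
      ((LinearEquiv.ofEq _ _ hkerres).trans (Submodule.comapSubtypeEquivOfLe hle2))
  refine ⟨part1, ⟨e2⟩, ?_⟩
  constructor
  · intro hnt
    haveI := hnt
    have hntk : Nontrivial ↥(⨅ i, LinearMap.ker (A i)) := e2.symm.toEquiv.nontrivial
    have hne : (⨅ i, LinearMap.ker (A i)) ≠ ⊥ := Submodule.nontrivial_iff_ne_bot.mp hntk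
    intro h0
    apply hne
    apply le_bot_iff.mp
    rw [← h0]
    exact hle2
  · intro hne0
    have hinf : (⨅ i, LinearMap.ker (A i)) ≠ ⊥ := joint_ker_ne_bot A hA hne0
    haveI : Nontrivial ↥(⨅ i, LinearMap.ker (A i)) := Submodule.nontrivial_iff_ne_bot.mpr hinf
    exact e2.toEquiv.nontrivial

end KN
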